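/- Let p be a prime, n a positive integer, and let y, z be elements of Z_p^n. Let L_{z,y} = { (z + a·y)^(p-1) : a ∈ Z_p } and M_{z,y} = { z^(k) · y^(p-1-k) : 0 ≤ k ≤ p-1 } (products of polynomials). Then the Z_p-linear span of L_{z,y} equals the Z_p-linear span of M_{z,y} inside Z_p[x_1,...,x_n]. -/

import Mathlib

open MvPolynomial

lemma zmod_sum_pow_aux {p : ℕ} [inst : Fact p.Prime] (i : ℕ) :
    ∑ a : ZMod p, a ^ i = if i ≠ 0 ∧ (p - 1) ∣ i then (-1 : ZMod p) else 0 := by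
  have hp : p.Prime := inst.out
  classical
  rcases eq_or_ne i 0 with rfl | hi
  · simp [Finset.card_univ, ZMod.natCast_self]
  · have h := FiniteField.sum_pow_units (ZMod p) i
    rw [ZMod.card] at h
    let φ : (ZMod p)ˣ ↪ ZMod p := ⟨fun x ↦ x, fun _ _ h => Units.ext h⟩
    have hmap : Finset.univ.map φ = Finset.univ.erase 0 := by
      ext x
      simp only [Finset.mem_map, Finset.mem_univ, Function.Embedding.coeFn_mk, true_and,
        Finset.mem_erase, and_true, φ]
      constructor
      · rintro ⟨u, rfl⟩; exact u.ne_zero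
      · intro hx; exact ⟨(IsUnit.mk0 x hx).unit, rfl⟩
    have key : ∑ a : ZMod p, a ^ i = ∑ x : (ZMod p)ˣ, ((x : ZMod p)) ^ i := by
      rw [← Finset.sum_erase_add _ _ (Finset.mem_univ (0 : ZMod p)), zero_pow hi, add_zero,
        ← hmap, Finset.sum_map]
      rfl
    rw [key]
    simpa [hi] using h

lemma choose_cast_zmod_aux {p : ℕ} (hp : p.Prime) :
    ∀ k, k ≤ p - 1 → (((p - 1).choose k : ℕ) : ZMod p) = (-1) ^ k := by
  intro k
  induction k with
  | zero => intro _; simp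
  | succ k ih =>
    intro hk
    have hk' : k ≤ p - 1 := by omega
    have hkp : k + 1 < p := by have := hp.two_le; omega
    have hpas : p.choose (k + 1) = (p - 1).choose k + (p - 1).choose (k + 1) := by
      conv_lhs => rw [← Nat.succ_pred_eq_of_pos hp.pos]
      exact Nat.choose_succ_succ _ _
    have hdvd : ((p.choose (k + 1) : ℕ) : ZMod p) = 0 :=
      (ZMod.natCast_eq_zero_iff _ _).mpr (hp.dvd_choose_self (Nat.succ_ne_zero k) hkp)
    have hcast := congrArg (fun m : ℕ => (m : ZMod p)) hpas
    simp only [Nat.cast_add] at hcast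
    rw [hdvd, ih hk'] at hcast
    have h2 : (((p - 1).choose (k + 1) : ℕ) : ZMod p) = -(-1) ^ k := by
      linear_combination -hcast
    rw [h2, pow_succ]; ring

lemma span_line_aux {p n : ℕ} (hp : p.Prime) (Z Y : MvPolynomial (Fin n) (ZMod p)) :
    Submodule.span (ZMod p)
        {P : MvPolynomial (Fin n) (ZMod p) | ∃ a : ZMod p, P = (Z + C a * Y) ^ (p - 1)} =
      Submodule.span (ZMod p)
        {P : MvPolynomial (Fin n) (ZMod p) |
          ∃ k : ℕ, k ≤ p - 1 ∧ P = Z ^ k * Y ^ (p - 1 - k)} := by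
  haveI : Fact p.Prime := ⟨hp⟩
  have hp1 : 1 ≤ p := hp.pos
  have hp2 : 2 ≤ p := hp.two_le
  have hexp : ∀ a : ZMod p, (Z + C a * Y) ^ (p - 1)
      = ∑ j ∈ Finset.range p,
          (a ^ (p - 1 - j) * (((p - 1).choose j : ℕ) : ZMod p)) • (Z ^ j * Y ^ (p - 1 - j)) := by
    intro a
    rw [add_pow, Nat.sub_add_cancel hp1]
    refine Finset.sum_congr rfl fun j hj => ?_
    rw [mul_pow, ← C_pow, smul_eq_C_mul, map_mul,
      ← map_natCast (C : ZMod p →+* MvPolynomial (Fin n) (ZMod p))]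
    ring
  apply le_antisymm
  · rw [Submodule.span_le]
    rintro P ⟨a, rfl⟩
    rw [hexp]
    exact Submodule.sum_mem _ fun j hj => Submodule.smul_mem _ _
      (Submodule.subset_span ⟨j, by have := Finset.mem_range.mp hj; omega, rfl⟩)
  · rw [Submodule.span_le]
    rintro P ⟨k, hk, rfl⟩
    by_cases hkp : k = p - 1
    · subst hkp
      simp only [Nat.sub_self, pow_zero, mul_one]
      exact Submodule.subset_span ⟨0, by simp⟩
    · have hklt : k < p - 1 := lt_of_le_of_ne hk hkp
      have hS : (∑ a : ZMod p, a ^ k • (Z + C a * Y) ^ (p - 1))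
          = (-(-1 : ZMod p) ^ k) • (Z ^ k * Y ^ (p - 1 - k)) := by
        have step1 : (∑ a : ZMod p, a ^ k • (Z + C a * Y) ^ (p - 1))
            = ∑ j ∈ Finset.range p,
                ((∑ a : ZMod p, a ^ (k + (p - 1 - j))) * (((p - 1).choose j : ℕ) : ZMod p))
                  • (Z ^ j * Y ^ (p - 1 - j)) := by
          simp only [hexp, Finset.smul_sum, smul_smul]
          rw [Finset.sum_comm]
          refine Finset.sum_congr rfl fun j hj => ?_
          rw [← Finset.sum_smul, Finset.sum_mul]
          congr 1
          refine Finset.sum_congr rfl fun a _ => ?_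
          rw [← mul_assoc, ← pow_add]
        rw [step1, Finset.sum_eq_single k]
        · have he : k + (p - 1 - k) = p - 1 := by omega
          rw [he, zmod_sum_pow_aux, if_pos ⟨by omega, dvd_rfl⟩,
            choose_cast_zmod_aux hp k hk]
          ring_nf
        · intro j hj hjk
          have hjp : j < p := Finset.mem_range.mp hj
          rw [zmod_sum_pow_aux, if_neg, zero_mul, zero_smul]
          rintro ⟨hne, hdvd⟩
          rcases hdvd with ⟨c, hc⟩
          match c with
          | 0 => omega
          | 1 => omega
          | (c + 2) =>
            have : (p - 1) * (c + 2) = (p - 1) * c + 2 * (p - 1) := by ring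
            have h0 : 0 ≤ (p - 1) * c := Nat.zero_le _
            omega
        · intro hk'
          exact absurd (Finset.mem_range.mpr (by omega)) hk'
      have hmem : (∑ a : ZMod p, a ^ k • (Z + C a * Y) ^ (p - 1))
          ∈ Submodule.span (ZMod p)
            {P : MvPolynomial (Fin n) (ZMod p) | ∃ a : ZMod p, P = (Z + C a * Y) ^ (p - 1)} :=
        Submodule.sum_mem _ fun a _ => Submodule.smul_mem _ _ (Submodule.subset_span ⟨a, rfl⟩)
      rw [hS] at hmem
      have hc : (-(-1 : ZMod p) ^ k) ≠ 0 :=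
        neg_ne_zero.mpr (pow_ne_zero _ (neg_ne_zero.mpr one_ne_zero))
      have := Submodule.smul_mem _ (-(-1 : ZMod p) ^ k)⁻¹ hmem
      rwa [inv_smul_smul₀ hc] at this

/-- For a prime `p` and `y z : (ZMod p)^n`, the `ZMod p`-span of
`L_{z,y} = {(z + a • y)^(p-1) : a ∈ ZMod p}` equals the span of
`M_{z,y} = {z^(k) * y^(p-1-k) : 0 ≤ k ≤ p-1}` inside `ZMod p[x_1,…,x_n]`. -/
theorem span_line_eq_span_products {p n : ℕ} (hp : p.Prime) (hn : 0 < n)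
    (y z : Fin n → ZMod p) :
    Submodule.span (ZMod p)
        {P : MvPolynomial (Fin n) (ZMod p) |
          ∃ a : ZMod p, P = (∑ j, C ((z + a • y) j) * X j) ^ (p - 1)} =
      Submodule.span (ZMod p)
        {P : MvPolynomial (Fin n) (ZMod p) |
          ∃ k : ℕ, k ≤ p - 1 ∧
            P = (∑ j, C (z j) * X j) ^ k * (∑ j, C (y j) * X j) ^ (p - 1 - k)} := by
  have hsum : ∀ a : ZMod p, (∑ j, C ((z + a • y) j) * X j : MvPolynomial (Fin n) (ZMod p))
      = (∑ j, C (z j) * X j) + C a * (∑ j, C (y j) * X j) := by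
    intro a
    simp only [Pi.add_apply, Pi.smul_apply, smul_eq_mul, map_add, map_mul, add_mul,
      Finset.sum_add_distrib, Finset.mul_sum, mul_assoc]
  have hset : {P : MvPolynomial (Fin n) (ZMod p) |
      ∃ a : ZMod p, P = (∑ j, C ((z + a • y) j) * X j) ^ (p - 1)}
      = {P : MvPolynomial (Fin n) (ZMod p) |
          ∃ a : ZMod p, P = ((∑ j, C (z j) * X j) + C a * (∑ j, C (y j) * X j)) ^ (p - 1)} :=
    Set.ext fun P => exists_congr fun a => by rw [hsum a]
  rw [hset]
  exact span_line_aux hp _ _
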